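/- Let R be a commutative ring and let S be a commutative R-algebra which is finitely generated and free as an R-module. For every R-module M, the S-linear map can : Hom_R(S, R) ⊗_S (M ⊗_R S) → Hom_R(S, M) sending α ⊗ (m ⊗ t) to the R-linear homomorphism s ↦ α(s·t) • m is an isomorphism of S-modules. -/

import Mathlib

open TensorProduct

section

variable {R S : Type*} [CommRing R] [CommRing S] [Algebra R S]
variable {M : Type*} [AddCommGroup M] [Module R M]

/-- The `S`-module structure on `Hom_R(S, M)` given by `(s • f) t = f (s * t)`. -/
noncomputable instance homDomainSMul : SMul S (S →ₗ[R] M) :=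
  ⟨fun s f => f.comp (LinearMap.mulLeft R s)⟩

@[simp] lemma homDomainSMul_apply (s : S) (f : S →ₗ[R] M) (t : S) :
    (s • f) t = f (s * t) := rfl

noncomputable instance homDomainModule : Module S (S →ₗ[R] M) where
  one_smul f := LinearMap.ext fun t => by simp
  mul_smul s s' f := LinearMap.ext fun t => by
    simp only [homDomainSMul_apply]
    rw [mul_left_comm, mul_assoc]
  smul_zero s := LinearMap.ext fun t => rfl
  smul_add s f g := LinearMap.ext fun t => rfl
  add_smul s s' f := LinearMap.ext fun t => by
    simp only [homDomainSMul_apply, LinearMap.add_apply]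
    rw [add_mul, map_add]
  zero_smul f := LinearMap.ext fun t => by
    simp only [homDomainSMul_apply, LinearMap.zero_apply]
    rw [zero_mul, map_zero]

end

section CanAux

variable {R S : Type*} [CommRing R] [CommRing S] [Algebra R S]
variable {M : Type*} [AddCommGroup M] [Module R M]

/-- The `R`-bilinear map `(t, m) ↦ (s ↦ α (s * t) • m)`. -/
noncomputable def canAux (α : S →ₗ[R] R) : S →ₗ[R] M →ₗ[R] (S →ₗ[R] M) :=
  LinearMap.mk₂ R
    (fun t m => (LinearMap.toSpanSingleton R M m).comp (α.comp (LinearMap.mulRight R t)))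
    (by intro t t' m; ext s; simp [mul_add, add_smul])
    (by intro c t m; ext s; simp [Algebra.mul_smul_comm, mul_smul])
    (by intro t m m'; ext s; simp)
    (by intro c t m; ext s
        simp only [LinearMap.coe_comp, Function.comp_apply, LinearMap.mulRight_apply,
          LinearMap.toSpanSingleton_apply, LinearMap.smul_apply]
        rw [smul_comm])

@[simp] lemma canAux_apply (α : S →ₗ[R] R) (t : S) (m : M) (s : S) :
    canAux α t m s = α (s * t) • m := rfl

/-- `canAux α`, lifted to `S ⊗[R] M` and upgraded to an `S`-linear map. -/
noncomputable def canHalf (α : S →ₗ[R] R) : (S ⊗[R] M) →ₗ[S] (S →ₗ[R] M) :=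
  { TensorProduct.lift (canAux (M := M) α) with
    map_smul' := by
      intro c y
      show TensorProduct.lift (canAux (M := M) α) (c • y)
          = c • TensorProduct.lift (canAux (M := M) α) y
      induction y using TensorProduct.induction_on with
      | zero => simp
      | tmul t m =>
        rw [smul_tmul']
        ext s
        simp only [TensorProduct.lift.tmul, canAux_apply, homDomainSMul_apply, smul_eq_mul]
        rw [mul_left_comm, mul_assoc]
      | add y z hy hz =>
        rw [smul_add, map_add, map_add, hy, hz, smul_add] }

@[simp] lemma canHalf_apply (α : S →ₗ[R] R) (t : S) (m : M) :
    canHalf α (t ⊗ₜ[R] m) = canAux α t m := rfl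

/-- The `S`-bilinear version of the canonical map. -/
noncomputable def canBil :
    (S →ₗ[R] R) →ₗ[S] (S ⊗[R] M) →ₗ[S] (S →ₗ[R] M) where
  toFun := canHalf
  map_add' α β := by
    ext y : 1
    induction y using TensorProduct.induction_on with
    | zero => simp
    | tmul t m => ext s; simp [add_smul]
    | add y z hy hz => simp only [map_add, LinearMap.add_apply] at hy hz ⊢; rw [hy, hz]; try abel
  map_smul' c α := by
    ext y : 1
    induction y using TensorProduct.induction_on with
    | zero => simp
    | tmul t m =>
      ext s
      simp only [RingHom.id_apply, canHalf_apply, canAux_apply, homDomainSMul_apply,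
        LinearMap.smul_apply]
      rw [mul_assoc]
    | add y z hy hz =>
      simp only [map_add, RingHom.id_apply, LinearMap.smul_apply, smul_add] at hy hz ⊢
      rw [hy, hz]

/-- The canonical map itself. -/
noncomputable def canMap :
    ((S →ₗ[R] R) ⊗[S] (S ⊗[R] M)) →ₗ[S] (S →ₗ[R] M) :=
  TensorProduct.lift canBil

@[simp] lemma canMap_apply (α : S →ₗ[R] R) (t : S) (m : M) (s : S) :
    canMap (α ⊗ₜ[S] (t ⊗ₜ[R] m)) s = α (s * t) • m := rfl

end CanAux

/-- Blickle–Böckle, Lemma 5.7 (free case): for `S` a commutative `R`-algebra which is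
finitely generated and free as an `R`-module, and `M` an `R`-module, the canonical
`S`-linear map `Hom_R(S, R) ⊗_S (S ⊗_R M) → Hom_R(S, M)`, `α ⊗ (t ⊗ m) ↦ (s ↦ α(s·t) • m)`,
is an isomorphism of `S`-modules. -/
theorem can_hom_tensor_iso
    {R S : Type*} [CommRing R] [CommRing S] [Algebra R S]
    [Module.Finite R S] [Module.Free R S]
    (M : Type*) [AddCommGroup M] [Module R M] :
    ∃ e : ((S →ₗ[R] R) ⊗[S] (S ⊗[R] M)) ≃ₗ[S] (S →ₗ[R] M),
      ∀ (α : S →ₗ[R] R) (t : S) (m : M) (s : S),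
        e (α ⊗ₜ[S] (t ⊗ₜ[R] m)) s = α (s * t) • m := by
  classical
  let b : Module.Basis (Module.Free.ChooseBasisIndex R S) R S := Module.Free.chooseBasis R S
  -- the candidate inverse (as a bare function)
  set g : (S →ₗ[R] M) → ((S →ₗ[R] R) ⊗[S] (S ⊗[R] M)) :=
    fun f => ∑ i, (b.coord i) ⊗ₜ[S] ((1 : S) ⊗ₜ[R] f (b i)) with hg
  have hgadd : ∀ f f', g (f + f') = g f + g f' := by
    intro f f'
    simp [hg, TensorProduct.tmul_add, Finset.sum_add_distrib]
  have hright : ∀ f : S →ₗ[R] M, canMap (g f) = f := by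
    intro f
    ext s
    simp only [hg, map_sum, LinearMap.coe_sum, Finset.sum_apply, canMap_apply, mul_one,
      Module.Basis.coord_apply]
    calc ∑ i, b.repr s i • f (b i) = f (∑ i, b.repr s i • b i) := by
          rw [map_sum]; simp
      _ = f s := by rw [b.sum_repr s]
  have hleft : ∀ x : (S →ₗ[R] R) ⊗[S] (S ⊗[R] M), g (canMap x) = x := by
    intro x
    induction x using TensorProduct.induction_on with
    | zero => simp [hg]
    | add x y hx hy => rw [map_add, hgadd, hx, hy]
    | tmul α y =>
      induction y using TensorProduct.induction_on with
      | zero => simp [hg]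
      | add y z hy hz =>
        rw [TensorProduct.tmul_add, map_add, hgadd, hy, hz]
      | tmul t m =>
        have key : ∀ i, (b.coord i) ⊗ₜ[S] ((1 : S) ⊗ₜ[R] (α (b i * t) • m))
            = ((algebraMap R S (α (b i * t))) • b.coord i) ⊗ₜ[S] ((1 : S) ⊗ₜ[R] m) := by
          intro i
          rw [TensorProduct.tmul_smul, ← algebraMap_smul S (α (b i * t)),
            TensorProduct.tmul_smul, TensorProduct.smul_tmul']
        have hsum : (∑ i, (algebraMap R S (α (b i * t))) • b.coord i) = t • α := by
          ext s
          simp only [LinearMap.coe_sum, Finset.sum_apply, LinearMap.smul_apply,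
            homDomainSMul_apply, Module.Basis.coord_apply]
          have : ∀ i, b.coord i (algebraMap R S (α (b i * t)) * s)
              = α (b i * t) * b.repr s i := by
            intro i
            rw [← Algebra.smul_def, map_smul, Module.Basis.coord_apply, smul_eq_mul]
          calc ∑ i, b.repr (algebraMap R S (α (b i * t)) * s) i
              = ∑ i, α (b i * t) * b.repr s i := by
                refine Finset.sum_congr rfl fun i _ => ?_
                rw [← Module.Basis.coord_apply, this i]
            _ = α (t * s) := by
                rw [show t * s = t * ∑ i, b.repr s i • b i by rw [b.sum_repr s],
                  Finset.mul_sum, map_sum]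
                refine (Finset.sum_congr rfl fun i _ => ?_).symm
                rw [mul_smul_comm, map_smul, smul_eq_mul, mul_comm t (b i), mul_comm]
        have : g (canMap (α ⊗ₜ[S] (t ⊗ₜ[R] m)))
            = ∑ i, (b.coord i) ⊗ₜ[S] ((1 : S) ⊗ₜ[R] (α (b i * t) • m)) := by
          simp [hg]
        rw [this]
        simp_rw [key]
        rw [← TensorProduct.sum_tmul, hsum, TensorProduct.smul_tmul, TensorProduct.smul_tmul',
          smul_eq_mul, mul_one]
  have hbij : Function.Bijective (canMap (R := R) (S := S) (M := M)) :=
    ⟨Function.LeftInverse.injective hleft, fun f => ⟨g f, hright f⟩⟩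
  exact ⟨LinearEquiv.ofBijective canMap hbij, fun α t m s => by
    simp [LinearEquiv.ofBijective_apply]⟩
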